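/- Let (Ω, 𝔉, μ) be a probability space, let Gₙ, G₀ : Ω → ℝ^d be Bochner square-integrable random vectors, and let W : Ω → ℝ be a square-integrable random variable. Let θₙ, θ⁰, u ∈ ℝ^d be fixed vectors and A, C_w, C_g ≥ 0 constants such that: (i) ∫ ‖Gₙ − G₀‖² dμ ≤ A·‖θₙ − θ⁰‖²; (ii) ‖G₀(ω)‖ ≤ C_g for μ-almost every ω; (iii) ∫ (1 − W)² dμ ≤ C_w·‖θₙ − θ⁰‖². Define Jₙ := ∫ Gₙ dμ, J₀ := ∫ W·G₀ dμ, e := u − J₀, and the random vector v := Gₙ − W·G₀ + u. Then ∫ ‖v‖² dμ ≤ (2A + 2C_g²·C_w)·‖θₙ − θ⁰‖² + 2‖Jₙ‖² + 2‖e‖². -/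

import Mathlib

open MeasureTheory

/-- Second-moment bound for the semi-stochastic (SCSG-corrected) gradient
`v = Gₙ − W·G₀ + u` (paper's Lemma B.3). -/
theorem semi_stochastic_gradient_second_moment
    {Ω : Type*} [MeasurableSpace Ω] (μ : Measure Ω) [IsProbabilityMeasure μ]
    {d : ℕ} (Gn G0 : Ω → EuclideanSpace ℝ (Fin d)) (W : Ω → ℝ)
    (hGn : MemLp Gn 2 μ) (hG0 : MemLp G0 2 μ) (hW : MemLp W 2 μ)
    (θn θ0 u : EuclideanSpace ℝ (Fin d)) (A Cw Cg : ℝ)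
    (hA : 0 ≤ A) (hCw : 0 ≤ Cw) (hCg : 0 ≤ Cg)
    (h1 : ∫ ω, ‖Gn ω - G0 ω‖ ^ 2 ∂μ ≤ A * ‖θn - θ0‖ ^ 2)
    (h2 : ∀ᵐ ω ∂μ, ‖G0 ω‖ ≤ Cg)
    (h3 : ∫ ω, (1 - W ω) ^ 2 ∂μ ≤ Cw * ‖θn - θ0‖ ^ 2) :
    ∫ ω, ‖Gn ω - W ω • G0 ω + u‖ ^ 2 ∂μ ≤
      (2 * A + 2 * Cg ^ 2 * Cw) * ‖θn - θ0‖ ^ 2 +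
        2 * ‖∫ ω, Gn ω ∂μ‖ ^ 2 + 2 * ‖u - ∫ ω, W ω • G0 ω ∂μ‖ ^ 2 := by
  set X : Ω → EuclideanSpace ℝ (Fin d) := fun ω => Gn ω - W ω • G0 ω with hXdef
  -- W • G0 is in L²
  have hWG0meas : AEStronglyMeasurable (fun ω => W ω • G0 ω) μ :=
    hW.aestronglyMeasurable.smul hG0.aestronglyMeasurable
  have hWG0 : MemLp (fun ω => W ω • G0 ω) 2 μ := by
    refine MemLp.of_le (hW.const_mul Cg) hWG0meas ?_
    filter_upwards [h2] with ω hω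
    have : ‖W ω • G0 ω‖ = |W ω| * ‖G0 ω‖ := by
      rw [norm_smul, Real.norm_eq_abs]
    rw [this, Real.norm_eq_abs, abs_mul, abs_of_nonneg hCg]
    calc |W ω| * ‖G0 ω‖ ≤ |W ω| * Cg := by
          exact mul_le_mul_of_nonneg_left hω (abs_nonneg _)
      _ = Cg * |W ω| := mul_comm _ _
  have hX : MemLp X 2 μ := hGn.sub hWG0
  have hXint : Integrable X μ := hX.integrable one_le_two
  have hXsq : Integrable (fun ω => ‖X ω‖ ^ 2) μ :=
    (memLp_two_iff_integrable_sq_norm hX.aestronglyMeasurable).1 hX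
  have hGnG0sq : Integrable (fun ω => ‖Gn ω - G0 ω‖ ^ 2) μ :=
    (memLp_two_iff_integrable_sq_norm (hGn.sub hG0).aestronglyMeasurable).1 (hGn.sub hG0)
  have hWsq : Integrable (fun ω => (1 - W ω) ^ 2) μ := by
    have : MemLp (fun ω => 1 - W ω) 2 μ := (memLp_const 1).sub hW
    exact this.integrable_sq
  -- inner product integrability
  have hinner : Integrable (fun ω => (inner ℝ u (X ω) : ℝ)) μ := by
    exact hXint.inner_const u |>.congr (by
      filter_upwards with ω using real_inner_comm _ _)
  -- Step 1: expand the square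
  have expand : ∫ ω, ‖X ω + u‖ ^ 2 ∂μ
      = (∫ ω, ‖X ω‖ ^ 2 ∂μ) + 2 * (inner ℝ u (∫ ω, X ω ∂μ) : ℝ) + ‖u‖ ^ 2 := by
    have : ∀ ω, ‖X ω + u‖ ^ 2 = ‖X ω‖ ^ 2 + 2 * (inner ℝ u (X ω) : ℝ) + ‖u‖ ^ 2 := by
      intro ω
      rw [norm_add_sq_real, real_inner_comm]
    simp_rw [this]
    have i2 : Integrable (fun ω => 2 * (inner ℝ u (X ω) : ℝ)) μ := hinner.const_mul 2
    have i1 : Integrable (fun ω => ‖X ω‖ ^ 2 + 2 * (inner ℝ u (X ω) : ℝ)) μ := hXsq.add i2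
    rw [integral_add i1 (integrable_const _), integral_add hXsq i2, integral_const_mul,
      integral_inner hXint, integral_const, probReal_univ, one_smul]
  -- Step 2: combine cross term with constants
  have key : 2 * (inner ℝ u (∫ ω, X ω ∂μ) : ℝ) + ‖u‖ ^ 2
      ≤ ‖(∫ ω, X ω ∂μ) + u‖ ^ 2 := by
    rw [norm_add_sq_real, real_inner_comm]
    nlinarith [sq_nonneg ‖∫ ω, X ω ∂μ‖]
  -- Step 3: bound the second moment of X
  have hXbound : ∫ ω, ‖X ω‖ ^ 2 ∂μ ≤ (2 * A + 2 * Cg ^ 2 * Cw) * ‖θn - θ0‖ ^ 2 := by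
    have hpt : ∀ᵐ ω ∂μ, ‖X ω‖ ^ 2
        ≤ 2 * ‖Gn ω - G0 ω‖ ^ 2 + 2 * Cg ^ 2 * (1 - W ω) ^ 2 := by
      filter_upwards [h2] with ω hω
      have hXeq : X ω = (Gn ω - G0 ω) + (1 - W ω) • G0 ω := by
        simp only [hXdef, sub_smul, one_smul]
        abel
      have h4 : ‖X ω‖ ≤ ‖Gn ω - G0 ω‖ + ‖(1 - W ω) • G0 ω‖ := by
        rw [hXeq]; exact norm_add_le _ _
      have h5 : ‖(1 - W ω) • G0 ω‖ ^ 2 ≤ Cg ^ 2 * (1 - W ω) ^ 2 := by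
        rw [norm_smul, Real.norm_eq_abs, mul_pow, sq_abs]
        have : ‖G0 ω‖ ^ 2 ≤ Cg ^ 2 := by
          exact pow_le_pow_left₀ (norm_nonneg _) hω 2
        nlinarith [sq_nonneg (1 - W ω)]
      nlinarith [norm_nonneg (X ω), norm_nonneg (Gn ω - G0 ω),
        norm_nonneg ((1 - W ω) • G0 ω), sq_nonneg (‖Gn ω - G0 ω‖ - ‖(1 - W ω) • G0 ω‖)]
    have hmono : ∫ ω, ‖X ω‖ ^ 2 ∂μ
        ≤ ∫ ω, (2 * ‖Gn ω - G0 ω‖ ^ 2 + 2 * Cg ^ 2 * (1 - W ω) ^ 2) ∂μ :=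
      integral_mono_ae hXsq ((hGnG0sq.const_mul 2).add (hWsq.const_mul (2 * Cg ^ 2))) hpt
    have heq : ∫ ω, (2 * ‖Gn ω - G0 ω‖ ^ 2 + 2 * Cg ^ 2 * (1 - W ω) ^ 2) ∂μ
        = 2 * ∫ ω, ‖Gn ω - G0 ω‖ ^ 2 ∂μ + 2 * Cg ^ 2 * ∫ ω, (1 - W ω) ^ 2 ∂μ := by
      have j1 : Integrable (fun ω => 2 * ‖Gn ω - G0 ω‖ ^ 2) μ := hGnG0sq.const_mul 2
      have j2 : Integrable (fun ω => 2 * Cg ^ 2 * (1 - W ω) ^ 2) μ := hWsq.const_mul _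
      rw [integral_add j1 j2, integral_const_mul, integral_const_mul]
    calc ∫ ω, ‖X ω‖ ^ 2 ∂μ
        ≤ 2 * ∫ ω, ‖Gn ω - G0 ω‖ ^ 2 ∂μ + 2 * Cg ^ 2 * ∫ ω, (1 - W ω) ^ 2 ∂μ := by
          rw [← heq]; exact hmono
      _ ≤ 2 * (A * ‖θn - θ0‖ ^ 2) + 2 * Cg ^ 2 * (Cw * ‖θn - θ0‖ ^ 2) := by
          gcongr
      _ = (2 * A + 2 * Cg ^ 2 * Cw) * ‖θn - θ0‖ ^ 2 := by ring
  -- Step 4: bound the mean term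
  have hmean : ‖(∫ ω, X ω ∂μ) + u‖ ^ 2
      ≤ 2 * ‖∫ ω, Gn ω ∂μ‖ ^ 2 + 2 * ‖u - ∫ ω, W ω • G0 ω ∂μ‖ ^ 2 := by
    have hsplit : (∫ ω, X ω ∂μ) + u
        = (∫ ω, Gn ω ∂μ) + (u - ∫ ω, W ω • G0 ω ∂μ) := by
      rw [hXdef, integral_sub (hGn.integrable one_le_two) (hWG0.integrable one_le_two)]
      abel
    rw [hsplit]
    have h6 : ‖(∫ ω, Gn ω ∂μ) + (u - ∫ ω, W ω • G0 ω ∂μ)‖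
        ≤ ‖∫ ω, Gn ω ∂μ‖ + ‖u - ∫ ω, W ω • G0 ω ∂μ‖ := norm_add_le _ _
    nlinarith [norm_nonneg ((∫ ω, Gn ω ∂μ) + (u - ∫ ω, W ω • G0 ω ∂μ)),
      norm_nonneg (∫ ω, Gn ω ∂μ), norm_nonneg (u - ∫ ω, W ω • G0 ω ∂μ),
      sq_nonneg (‖∫ ω, Gn ω ∂μ‖ - ‖u - ∫ ω, W ω • G0 ω ∂μ‖)]
  calc ∫ ω, ‖Gn ω - W ω • G0 ω + u‖ ^ 2 ∂μ
      = (∫ ω, ‖X ω‖ ^ 2 ∂μ) + (2 * (inner ℝ u (∫ ω, X ω ∂μ) : ℝ) + ‖u‖ ^ 2) := by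
        rw [← add_assoc]; exact expand
    _ ≤ (2 * A + 2 * Cg ^ 2 * Cw) * ‖θn - θ0‖ ^ 2 + ‖(∫ ω, X ω ∂μ) + u‖ ^ 2 :=
        add_le_add hXbound key
    _ ≤ _ := by
        rw [add_assoc]
        exact add_le_add_right hmean _
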